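/- arXiv:1501.03640 — 2 statements merged into one kernel-verified Lean document; each statement's English description precedes it below -/
import Mathlib

section
/- Let c > 0 and let μ₁, μ₂ be scaling functions with lim_{n→∞} μ₁(n)/μ₂(n) = c. Then P_{μ₁}(E) = P_{μ₂}(E) for every E ⊆ ℕ. -/
open Filter Topology

/-- `lamMu μ E n`: the analogue of the largest-hole length at infinity, i.e. the supremum
of `μ a - μ b` over `n ≤ a < b` such that no element of `E` lies strictly between `a` and `b`. -/
noncomputable def lamMu (μ : ℕ → ℝ) (E : Set ℕ) (n : ℕ) : ℝ :=
  sSup {d : ℝ | ∃ a b : ℕ, n ≤ a ∧ a < b ∧ (∀ m : ℕ, a < m → m < b → m ∉ E) ∧ d = μ a - μ b}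

lemma lamSet_nonempty (μ : ℕ → ℝ) (E : Set ℕ) (n : ℕ) :
    {d : ℝ | ∃ a b : ℕ, n ≤ a ∧ a < b ∧ (∀ m : ℕ, a < m → m < b → m ∉ E) ∧ d = μ a - μ b}.Nonempty :=
  ⟨μ n - μ (n+1), n, n+1, le_rfl, Nat.lt_succ_self _, fun m h1 h2 _ => by omega, rfl⟩

lemma lamSet_bddAbove (μ : ℕ → ℝ) (hanti : StrictAnti μ) (hpos : ∀ k, 0 < μ k) (E : Set ℕ) (n : ℕ) :
    BddAbove {d : ℝ | ∃ a b : ℕ, n ≤ a ∧ a < b ∧ (∀ m : ℕ, a < m → m < b → m ∉ E) ∧ d = μ a - μ b} := by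
  refine ⟨μ n, ?_⟩
  rintro d ⟨a, b, hna, hab, _, rfl⟩
  have h1 := hpos b
  have h2 := hanti.antitone hna
  linarith

lemma lamMu_nonneg (μ : ℕ → ℝ) (hanti : StrictAnti μ) (hpos : ∀ k, 0 < μ k) (E : Set ℕ) (n : ℕ) :
    0 ≤ lamMu μ E n := by
  have h := le_csSup (lamSet_bddAbove μ hanti hpos E n)
    (lamSet_nonempty μ E n).some_mem
  -- instead: element μ n - μ (n+1) is in set and nonneg
  have hmem : μ n - μ (n+1) ∈ {d : ℝ | ∃ a b : ℕ, n ≤ a ∧ a < b ∧ (∀ m : ℕ, a < m → m < b → m ∉ E) ∧ d = μ a - μ b} :=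
    ⟨n, n+1, le_rfl, Nat.lt_succ_self _, fun m h1 h2 _ => by omega, rfl⟩
  have := le_csSup (lamSet_bddAbove μ hanti hpos E n) hmem
  have := hanti (Nat.lt_succ_self n)
  unfold lamMu
  linarith

lemma lamMu_le (μ : ℕ → ℝ) (hanti : StrictAnti μ) (hpos : ∀ k, 0 < μ k) (E : Set ℕ) (n : ℕ) :
    lamMu μ E n ≤ μ n := by
  refine csSup_le (lamSet_nonempty μ E n) ?_
  rintro d ⟨a, b, hna, hab, _, rfl⟩
  have h1 := hpos b
  have h2 := hanti.antitone hna
  linarith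

lemma lamMu_key (c ε : ℝ) (hc : 0 < c) (μ₁ μ₂ : ℕ → ℝ)
    (hμ₁anti : StrictAnti μ₁) (hμ₁pos : ∀ k, 0 < μ₁ k)
    (hμ₂anti : StrictAnti μ₂) (hμ₂pos : ∀ k, 0 < μ₂ k)
    (E : Set ℕ) (n : ℕ)
    (h : ∀ k, n ≤ k → |μ₁ k / μ₂ k - c| ≤ ε) :
    |lamMu μ₁ E n - c * lamMu μ₂ E n| ≤ 2 * ε * μ₂ n := by
  have hbound : ∀ k, n ≤ k → (c - ε) * μ₂ k ≤ μ₁ k ∧ μ₁ k ≤ (c + ε) * μ₂ k := by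
    intro k hk
    have h2 := hμ₂pos k
    have := abs_le.1 (h k hk)
    constructor
    · have h3 : (c - ε) ≤ μ₁ k / μ₂ k := by linarith [this.1]
      exact (le_div_iff₀ h2).1 h3
    · have h3 : μ₁ k / μ₂ k ≤ c + ε := by linarith [this.2]
      exact (div_le_iff₀ h2).1 h3
  have hε0 : 0 ≤ ε := le_trans (abs_nonneg _) (h n le_rfl)
  rw [abs_sub_le_iff]
  constructor
  · -- lamMu μ₁ ≤ c * lamMu μ₂ + 2 ε μ₂ n
    rw [sub_le_iff_le_add]
    refine csSup_le (lamSet_nonempty μ₁ E n) ?_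
    rintro d ⟨a, b, hna, hab, hgap, rfl⟩
    have hnb : n ≤ b := le_of_lt (lt_of_le_of_lt hna hab)
    have ha := hbound a hna
    have hb := hbound b hnb
    have hmem : μ₂ a - μ₂ b ≤ lamMu μ₂ E n :=
      le_csSup (lamSet_bddAbove μ₂ hμ₂anti hμ₂pos E n) ⟨a, b, hna, hab, hgap, rfl⟩
    have h2a : μ₂ a ≤ μ₂ n := hμ₂anti.antitone hna
    have h2b : μ₂ b ≤ μ₂ n := hμ₂anti.antitone hnb
    have hcL := mul_le_mul_of_nonneg_left hmem hc.le
    have e1 : ε * μ₂ a ≤ ε * μ₂ n := mul_le_mul_of_nonneg_left h2a hε0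
    have e2 : ε * μ₂ b ≤ ε * μ₂ n := mul_le_mul_of_nonneg_left h2b hε0
    nlinarith [ha.2, hb.1]
  · -- c * lamMu μ₂ ≤ lamMu μ₁ + 2 ε μ₂ n
    rw [sub_le_iff_le_add]
    have hdiv : lamMu μ₂ E n ≤ (2 * ε * μ₂ n + lamMu μ₁ E n) / c := by
      refine csSup_le (lamSet_nonempty μ₂ E n) ?_
      rintro d ⟨a, b, hna, hab, hgap, rfl⟩
      have hnb : n ≤ b := le_of_lt (lt_of_le_of_lt hna hab)
      have ha := hbound a hna
      have hb := hbound b hnb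
      have hmem : μ₁ a - μ₁ b ≤ lamMu μ₁ E n :=
        le_csSup (lamSet_bddAbove μ₁ hμ₁anti hμ₁pos E n) ⟨a, b, hna, hab, hgap, rfl⟩
      have h2a : μ₂ a ≤ μ₂ n := hμ₂anti.antitone hna
      have h2b : μ₂ b ≤ μ₂ n := hμ₂anti.antitone hnb
      rw [le_div_iff₀ hc]
      have e1 : ε * μ₂ a ≤ ε * μ₂ n := mul_le_mul_of_nonneg_left h2a hε0
      have e2 : ε * μ₂ b ≤ ε * μ₂ n := mul_le_mul_of_nonneg_left h2b hε0
      nlinarith [ha.1, hb.2]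
    have := (le_div_iff₀ hc).1 hdiv
    linarith

lemma diff_tendsto_zero (c : ℝ) (hc : 0 < c) (μ₁ μ₂ : ℕ → ℝ)
    (hμ₁anti : StrictAnti μ₁) (hμ₁pos : ∀ n, 0 < μ₁ n)
    (hμ₂anti : StrictAnti μ₂) (hμ₂pos : ∀ n, 0 < μ₂ n)
    (hratio : Tendsto (fun n => μ₁ n / μ₂ n) atTop (nhds c))
    (E : Set ℕ) :
    Tendsto (fun n => lamMu μ₁ E n / μ₁ n - lamMu μ₂ E n / μ₂ n) atTop (nhds 0) := by
  rw [Metric.tendsto_atTop]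
  intro δ hδ
  have hε : (0:ℝ) < min (c/2) (δ*c/12) := by positivity
  set ε := min (c/2) (δ*c/12) with hεdef
  obtain ⟨N, hN⟩ := Metric.tendsto_atTop.1 hratio ε hε
  refine ⟨N, fun n hn => ?_⟩
  have hk : ∀ k, n ≤ k → |μ₁ k / μ₂ k - c| ≤ ε := fun k hkk => by
    have := hN k (le_trans hn hkk)
    rw [Real.dist_eq] at this
    exact this.le
  have hkey := lamMu_key c ε hc μ₁ μ₂ hμ₁anti hμ₁pos hμ₂anti hμ₂pos E n hk
  set l1 := lamMu μ₁ E n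
  set l2 := lamMu μ₂ E n
  set x1 := μ₁ n
  set x2 := μ₂ n
  have hx1 : 0 < x1 := hμ₁pos n
  have hx2 : 0 < x2 := hμ₂pos n
  have hl2n : 0 ≤ l2 := lamMu_nonneg μ₂ hμ₂anti hμ₂pos E n
  have hl2u : l2 ≤ x2 := lamMu_le μ₂ hμ₂anti hμ₂pos E n
  have hεc : ε ≤ c/2 := min_le_left _ _
  have hεδ : ε ≤ δ*c/12 := min_le_right _ _
  have hx12 : |x1 - c * x2| ≤ ε * x2 := by
    have := hk n le_rfl
    have h2 : |x1 / x2 - c| * x2 ≤ ε * x2 :=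
      mul_le_mul_of_nonneg_right this hx2.le
    have e : x1 - c * x2 = (x1 / x2 - c) * x2 := by field_simp
    rw [e, abs_mul, abs_of_pos hx2]
    exact h2
  have hx1lb : (c/2) * x2 ≤ x1 := by
    have := abs_le.1 hx12
    nlinarith
  rw [Real.dist_eq, sub_zero, div_sub_div _ _ hx1.ne' hx2.ne', abs_div,
    abs_of_pos (mul_pos hx1 hx2), div_lt_iff₀ (mul_pos hx1 hx2), mul_comm x1 l2]
  have hnum : |l1 * x2 - l2 * x1| ≤ 3 * ε * x2 * x2 := by
    have e1 : l1 * x2 - l2 * x1 = (l1 - c * l2) * x2 + l2 * (c * x2 - x1) := by ring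
    rw [e1]
    calc |(l1 - c * l2) * x2 + l2 * (c * x2 - x1)|
        ≤ |(l1 - c * l2) * x2| + |l2 * (c * x2 - x1)| := abs_add_le _ _
      _ = |l1 - c * l2| * x2 + l2 * |x1 - c * x2| := by
          rw [abs_mul, abs_mul, abs_of_pos hx2, abs_of_nonneg hl2n, abs_sub_comm (c * x2) x1]
      _ ≤ (2 * ε * x2) * x2 + x2 * (ε * x2) := by
          gcongr
      _ = 3 * ε * x2 * x2 := by ring
  calc |l1 * x2 - l2 * x1| ≤ 3 * ε * x2 * x2 := hnum
    _ < δ * (x1 * x2) := by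
        have p1 : δ * (c / 2 * x2 * x2) ≤ δ * (x1 * x2) :=
          mul_le_mul_of_nonneg_left (mul_le_mul_of_nonneg_right hx1lb hx2.le) hδ.le
        have p2 : ε * (x2 * x2) ≤ δ * c / 12 * (x2 * x2) :=
          mul_le_mul_of_nonneg_right hεδ (mul_pos hx2 hx2).le
        have p3 : 0 < ε * (x2 * x2) := mul_pos hε (mul_pos hx2 hx2)
        nlinarith

/-- The upper porosity of `E` at infinity w.r.t. the scaling function `μ`. -/
noncomputable def upperPorosityInf (μ : ℕ → ℝ) (E : Set ℕ) : ℝ :=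
  Filter.limsup (fun n => lamMu μ E n / μ n) Filter.atTop

/-- The lower porosity of `E` at infinity w.r.t. the scaling function `μ`. -/
noncomputable def lowerPorosityInf (μ : ℕ → ℝ) (E : Set ℕ) : ℝ :=
  Filter.liminf (fun n => lamMu μ E n / μ n) Filter.atTop

/-- The set of porosity numbers of `E` at infinity w.r.t. `μ`. -/
def porosityNumbersInf (μ : ℕ → ℝ) (E : Set ℕ) : Set ℝ :=
  {p : ℝ | ∃ n : ℕ → ℕ, StrictMono n ∧
    Tendsto (fun k => lamMu μ E (n k) / μ (n k)) atTop (nhds p)}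

theorem porosityNumbersInf_eq_of_ratio_tendsto_const
    (c : ℝ) (hc : 0 < c) (μ₁ μ₂ : ℕ → ℝ)
    (hμ₁anti : StrictAnti μ₁) (hμ₁pos : ∀ n, 0 < μ₁ n) (hμ₁0 : Tendsto μ₁ atTop (nhds 0))
    (hμ₂anti : StrictAnti μ₂) (hμ₂pos : ∀ n, 0 < μ₂ n) (hμ₂0 : Tendsto μ₂ atTop (nhds 0))
    (hratio : Tendsto (fun n => μ₁ n / μ₂ n) atTop (nhds c))
    (E : Set ℕ) :
    porosityNumbersInf μ₁ E = porosityNumbersInf μ₂ E := by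
  have hdiff := diff_tendsto_zero c hc μ₁ μ₂ hμ₁anti hμ₁pos hμ₂anti hμ₂pos hratio E
  ext p
  constructor
  · rintro ⟨n, hmono, hT⟩
    refine ⟨n, hmono, ?_⟩
    have h0 : Tendsto (fun k => lamMu μ₁ E (n k) / μ₁ (n k) - lamMu μ₂ E (n k) / μ₂ (n k))
        atTop (nhds 0) := hdiff.comp hmono.tendsto_atTop
    have := hT.sub h0
    simpa using this
  · rintro ⟨n, hmono, hT⟩
    refine ⟨n, hmono, ?_⟩
    have h0 : Tendsto (fun k => lamMu μ₁ E (n k) / μ₁ (n k) - lamMu μ₂ E (n k) / μ₂ (n k))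
        atTop (nhds 0) := hdiff.comp hmono.tendsto_atTop
    have := hT.add h0
    simpa using this
end

section
/- Let μ : ℕ → (0,∞) be an eventually concave scaling function. Then the right lower porosity at 0 of the image set μ(ℕ) ⊆ ℝ⁺ satisfies p̲(μ(ℕ)) = p̲_μ(ℕ) / (1 + p̲_μ(ℕ)). -/
open Filter Topology

/-- The length of the largest open subinterval of `(0, h)` containing no point of `E`. -/
noncomputable def lam (E : Set ℝ) (h : ℝ) : ℝ :=
  sSup {l : ℝ | ∃ a b : ℝ, 0 ≤ a ∧ a ≤ b ∧ b ≤ h ∧ Set.Ioo a b ∩ E = ∅ ∧ l = b - a}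

/-- The right lower porosity of `E ⊆ ℝ⁺` at `0`. -/
noncomputable def lowerPorosity (E : Set ℝ) : ℝ :=
  Filter.liminf (fun h => lam E h / h) (nhdsWithin 0 (Set.Ioi 0))

lemma lamMu_univ_eq (μ : ℕ → ℝ) (hμanti : StrictAnti μ) (hμpos : ∀ n, 0 < μ n)
    (N : ℕ) (hmono : ∀ a b : ℕ, N ≤ a → a ≤ b → μ b - μ (b+1) ≤ μ a - μ (a+1))
    (n : ℕ) (hn : N ≤ n) :
    lamMu μ Set.univ n = μ n - μ (n+1) := by
  unfold lamMu
  apply le_antisymm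
  · apply Real.sSup_le
    · rintro d ⟨a, b, hna, hab, hE, rfl⟩
      have hb : b = a + 1 := by
        by_contra hne
        exact hE (a+1) (Nat.lt_succ_self a) (by omega) (Set.mem_univ _)
      subst hb
      exact hmono n a hn hna
    · have := hμanti (Nat.lt_succ_self n); linarith
  · apply le_csSup
    · refine ⟨μ n, ?_⟩
      rintro d ⟨a, b, hna, hab, hE, rfl⟩
      have h1 : μ a ≤ μ n := hμanti.antitone hna
      have := hμpos b
      linarith
    · exact ⟨n, n+1, le_refl n, Nat.lt_succ_self n, fun m h1 h2 _ => by omega, rfl⟩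

lemma lam_nonneg' (E : Set ℝ) (h : ℝ) (hh : 0 ≤ h) : 0 ≤ lam E h := by
  apply le_csSup
  · refine ⟨h, ?_⟩
    rintro l ⟨a, b, ha, hab, hb, _, rfl⟩
    linarith
  · exact ⟨0, 0, le_refl 0, le_refl 0, hh, by simp, by ring⟩

lemma lam_le' (E : Set ℝ) (h : ℝ) (hh : 0 ≤ h) : lam E h ≤ h := by
  apply Real.sSup_le _ hh
  rintro l ⟨a, b, ha, hab, hb, _, rfl⟩
  linarith

lemma lam_eq (μ : ℕ → ℝ) (hμanti : StrictAnti μ) (hμpos : ∀ n, 0 < μ n)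
    (hμ0 : Tendsto μ atTop (nhds 0))
    (N : ℕ) (hmono : ∀ a b : ℕ, N ≤ a → a ≤ b → μ b - μ (b+1) ≤ μ a - μ (a+1))
    (n : ℕ) (hn : N ≤ n) (h : ℝ) (h1 : μ (n+1) < h) (h2 : h ≤ μ n) :
    lam (Set.range μ) h = max (h - μ (n+1)) (μ (n+1) - μ (n+2)) := by
  have hpos1 : 0 < μ (n+1) := hμpos _
  unfold lam
  apply le_antisymm
  · apply Real.sSup_le
    · rintro l ⟨a, b, ha, hab, hb, hempty, rfl⟩
      rcases eq_or_lt_of_le hab with rfl | hab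
      · simp only [sub_self]
        exact le_max_of_le_left (by linarith)
      have hbpos : 0 < b := lt_of_le_of_lt ha hab
      have hex : ∃ k, μ k < b := by
        have := hμ0.eventually (gt_mem_nhds hbpos)
        exact this.exists
      classical
      have hklt : μ (Nat.find hex) < b := Nat.find_spec hex
      have hkpos : 0 < Nat.find hex := by
        rcases Nat.eq_zero_or_pos (Nat.find hex) with h0 | h0
        · exfalso
          rw [h0] at hklt
          have : μ n ≤ μ 0 := hμanti.antitone (Nat.zero_le n)
          linarith
        · exact h0
      obtain ⟨m, hm⟩ : ∃ m, Nat.find hex = m + 1 := ⟨Nat.find hex - 1, by omega⟩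
      rw [hm] at hklt
      have hmge : b ≤ μ m := by
        by_contra hc
        exact Nat.find_min hex (m := m) (by omega) (by linarith)
      have hka : μ (m+1) ≤ a := by
        by_contra hc
        push_neg at hc
        have : μ (m+1) ∈ Set.Ioo a b ∩ Set.range μ := ⟨⟨hc, hklt⟩, ⟨m+1, rfl⟩⟩
        rw [hempty] at this
        exact this
      rcases le_or_gt m n with hmn | hmn
      · refine le_max_of_le_left ?_
        have : μ (n+1) ≤ μ (m+1) := hμanti.antitone (by omega)
        linarith
      · refine le_max_of_le_right ?_
        have := hmono (n+1) m (by omega) (by omega)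
        linarith
    · have : 0 < h - μ (n+1) := by linarith
      exact le_max_of_le_left this.le
  · apply max_le
    · apply le_csSup
      · refine ⟨h, ?_⟩
        rintro l ⟨a, b, ha, hab, hb, _, rfl⟩
        linarith
      · refine ⟨μ (n+1), h, (hμpos _).le, h1.le, le_refl h, ?_, rfl⟩
        ext x
        simp only [Set.mem_inter_iff, Set.mem_Ioo, Set.mem_range, Set.mem_empty_iff_false,
          iff_false, not_and, not_exists]
        rintro ⟨hx1, hx2⟩ k rfl
        have hkn : k < n + 1 := by
          by_contra hc
          have : μ k ≤ μ (n+1) := hμanti.antitone (by omega)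
          linarith
        have : μ n ≤ μ k := hμanti.antitone (by omega)
        linarith
    · apply le_csSup
      · refine ⟨h, ?_⟩
        rintro l ⟨a, b, ha, hab, hb, _, rfl⟩
        linarith
      · refine ⟨μ (n+2), μ (n+1), (hμpos _).le, (hμanti (by omega)).le, h1.le, ?_, rfl⟩
        ext x
        simp only [Set.mem_inter_iff, Set.mem_Ioo, Set.mem_range, Set.mem_empty_iff_false,
          iff_false, not_and, not_exists]
        rintro ⟨hx1, hx2⟩ k rfl
        have hkn : n + 1 < k := by
          by_contra hc
          have : μ (n+1) ≤ μ k := hμanti.antitone (by omega)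
          linarith
        have : μ k ≤ μ (n+2) := hμanti.antitone (by omega)
        linarith

lemma gcore (p x ε : ℝ) (hp : 0 ≤ p) (hx : 0 ≤ x) (hε : 0 < ε) (hpx : p - ε < x) :
    p / (1 + p) - ε ≤ x / (1 + x) := by
  have h1 : (0:ℝ) < 1 + p := by linarith
  have h2 : (0:ℝ) < 1 + x := by linarith
  have key : p / (1 + p) - x / (1 + x) = (p - x) / ((1 + p) * (1 + x)) := by
    field_simp; ring
  have hD : (1:ℝ) ≤ (1 + p) * (1 + x) := by nlinarith
  have : (p - x) / ((1 + p) * (1 + x)) ≤ ε := by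
    rw [div_le_iff₀ (by positivity)]
    nlinarith
  linarith [key ▸ this]

lemma profile_ge (c d h : ℝ) (hc : 0 < c) (hd : 0 < d) (hh : c < h) :
    d / (c + d) ≤ max (h - c) d / h := by
  have hh0 : 0 < h := lt_trans hc hh
  rcases le_total h (c + d) with hcase | hcase
  · refine le_trans ?_ (div_le_div_of_nonneg_right (le_max_right _ _) hh0.le)
    exact div_le_div_of_nonneg_left hd.le hh0 hcase
  · refine le_trans ?_ (div_le_div_of_nonneg_right (le_max_left _ _) hh0.le)
    rw [div_le_div_iff₀ (by positivity) hh0]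
    nlinarith

lemma gratio (m d : ℝ) (hm : 0 < m) (hd : 0 ≤ d) :
    d / (m + d) = (d / m) / (1 + d / m) := by
  have h2 : 0 < m + d := by linarith
  field_simp

lemma find_n (μ : ℕ → ℝ) (hμanti : StrictAnti μ) (hμ0 : Tendsto μ atTop (nhds 0))
    (K : ℕ) (h : ℝ) (hh : 0 < h) (hhK : h ≤ μ K) :
    ∃ n, K ≤ n ∧ μ (n+1) < h ∧ h ≤ μ n := by
  classical
  have hex : ∃ k, μ k < h := (hμ0.eventually (gt_mem_nhds hh)).exists
  have hklt : μ (Nat.find hex) < h := Nat.find_spec hex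
  have hkgt : K < Nat.find hex := by
    by_contra hc
    push_neg at hc
    have : μ K ≤ μ (Nat.find hex) := hμanti.antitone hc
    linarith
  obtain ⟨m, hm⟩ : ∃ m, Nat.find hex = m + 1 := ⟨Nat.find hex - 1, by omega⟩
  refine ⟨m, by omega, by rw [← hm]; exact hklt, ?_⟩
  by_contra hc
  push_neg at hc
  exact Nat.find_min hex (m := m) (by omega) hc

theorem lowerPorosity_image_of_eventually_concave
    (μ : ℕ → ℝ) (hμanti : StrictAnti μ) (hμpos : ∀ n, 0 < μ n)
    (hμ0 : Tendsto μ atTop (nhds 0))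
    (hconc : ∀ᶠ n : ℕ in atTop, μ n ≤ (μ (n - 1) + μ (n + 1)) / 2) :
    lowerPorosity (Set.range μ) =
      lowerPorosityInf μ Set.univ / (1 + lowerPorosityInf μ Set.univ) := by
  classical
  obtain ⟨N, hN⟩ := eventually_atTop.mp hconc
  have hmono : ∀ a b : ℕ, N ≤ a → a ≤ b → μ b - μ (b+1) ≤ μ a - μ (a+1) := by
    intro a b ha hab
    induction b, hab using Nat.le_induction with
    | base => exact le_refl _
    | succ b hb ih =>
      have h1 := hN (b+1) (by omega)
      simp only [Nat.add_sub_cancel] at h1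
      linarith
  set x : ℕ → ℝ := fun n => (μ n - μ (n+1)) / μ n with hxdef
  have hx0 : ∀ n, 0 ≤ x n := by
    intro n
    exact div_nonneg (by have := hμanti (Nat.lt_succ_self n); linarith) (hμpos n).le
  have hx1 : ∀ n, x n ≤ 1 := by
    intro n
    rw [hxdef, div_le_one (hμpos n)]
    have := hμpos (n+1); linarith
  have hPinf : lowerPorosityInf μ Set.univ = liminf x atTop := by
    apply Filter.liminf_congr
    filter_upwards [eventually_ge_atTop N] with n hn
    rw [lamMu_univ_eq μ hμanti hμpos N hmono n hn]
  rw [hPinf]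
  set p := liminf x atTop with hpdef
  have hbddx : IsBoundedUnder (· ≥ ·) atTop x := Filter.isBoundedUnder_of ⟨0, fun n => hx0 n⟩
  have hcobx : IsCoboundedUnder (· ≥ ·) atTop x :=
    (Filter.isBoundedUnder_of ⟨1, fun n => hx1 n⟩).isCoboundedUnder_ge
  have hp0 : 0 ≤ p := Filter.le_liminf_of_le hcobx (Eventually.of_forall hx0)
  have hev : ∀ ε : ℝ, 0 < ε → ∀ᶠ n in atTop, p - ε < x n := by
    intro ε hε
    exact Filter.eventually_lt_of_lt_liminf (by linarith) hbddx
  have hfreq : ∀ ε : ℝ, 0 < ε → ∃ᶠ n in atTop, x n < p + ε := by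
    intro ε hε
    exact Filter.frequently_lt_of_liminf_lt hcobx (by linarith)
  -- boundedness of the porosity profile
  set f : ℝ → ℝ := fun h => lam (Set.range μ) h / h with hfdef
  have hfge : ∀ᶠ h in nhdsWithin (0:ℝ) (Set.Ioi 0), 0 ≤ f h := by
    filter_upwards [self_mem_nhdsWithin] with h hh
    exact div_nonneg (lam_nonneg' _ _ (le_of_lt hh)) (le_of_lt hh)
  have hfle : ∀ᶠ h in nhdsWithin (0:ℝ) (Set.Ioi 0), f h ≤ 1 := by
    filter_upwards [self_mem_nhdsWithin] with h hh
    rw [hfdef]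
    exact div_le_one_of_le₀ (lam_le' _ _ (le_of_lt hh)) (le_of_lt hh)
  have hbddf : IsBoundedUnder (· ≥ ·) (nhdsWithin (0:ℝ) (Set.Ioi 0)) f :=
    ⟨0, by simpa using hfge⟩
  have hcobf : IsCoboundedUnder (· ≥ ·) (nhdsWithin (0:ℝ) (Set.Ioi 0)) f :=
    IsBoundedUnder.isCoboundedUnder_ge ⟨1, by simpa using hfle⟩
  have hΔpos : ∀ n : ℕ, 0 < μ n - μ (n+1) := by
    intro n; have := hμanti (Nat.lt_succ_self n); linarith
  show liminf f (nhdsWithin (0:ℝ) (Set.Ioi 0)) = p / (1 + p)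
  apply le_antisymm
  · -- liminf ≤ p/(1+p)
    apply le_of_forall_pos_le_add
    intro ε hε
    apply Filter.liminf_le_of_frequently_le _ hbddf
    -- frequently f h ≤ p/(1+p) + ε
    rw [Filter.frequently_iff]
    intro U hU
    obtain ⟨δ, hδ, hsub⟩ := mem_nhdsGT_iff_exists_Ioo_subset.mp hU
    obtain ⟨M₂, hM₂⟩ := eventually_atTop.mp (hμ0.eventually (gt_mem_nhds hδ))
    obtain ⟨n, hnge, hxn⟩ := Filter.frequently_atTop.mp (hfreq ε hε) (max N M₂ + 1)
    obtain ⟨m, rfl⟩ : ∃ m, n = m + 1 := ⟨n - 1, by omega⟩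
    have hmN : N ≤ m := by omega
    have hmM : M₂ ≤ m := by omega
    set h : ℝ := μ (m+1) + (μ (m+1) - μ (m+2)) with hhdef
    have hh1 : μ (m+1) < h := by have := hΔpos (m+1); rw [hhdef]; linarith
    have hh2 : h ≤ μ m := by
      have := hmono m (m+1) hmN (by omega)
      rw [hhdef]; linarith
    have hhpos : 0 < h := lt_trans (hμpos _) hh1
    have hhδ : h < δ := lt_of_le_of_lt (le_trans hh2 (le_of_eq rfl)) (by
      calc μ m ≤ μ M₂ := hμanti.antitone hmM
        _ < δ := hM₂ M₂ le_rfl)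
    refine ⟨h, hsub ⟨hhpos, hhδ⟩, ?_⟩
    have hlam := lam_eq μ hμanti hμpos hμ0 N hmono m hmN h hh1 hh2
    rw [hfdef]
    simp only []
    rw [hlam]
    have hmax : max (h - μ (m+1)) (μ (m+1) - μ (m+2)) = μ (m+1) - μ (m+2) := by
      rw [hhdef]; simp
    rw [hmax, hhdef]
    rw [gratio (μ (m+1)) (μ (m+1) - μ (m+2)) (hμpos _) (hΔpos _).le]
    have hxeq : (μ (m+1) - μ (m+2)) / μ (m+1) = x (m+1) := rfl
    rw [hxeq]
    have := gcore (x (m+1)) p ε (hx0 _) hp0 hε (by linarith)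
    linarith
  · -- p/(1+p) ≤ liminf
    have key : ∀ ε : ℝ, 0 < ε → p / (1 + p) - ε ≤ liminf f (nhdsWithin (0:ℝ) (Set.Ioi 0)) := by
      intro ε hε
      apply Filter.le_liminf_of_le hcobf
      obtain ⟨M, hM⟩ := eventually_atTop.mp (hev ε hε)
      have hmem : Set.Ioo (0:ℝ) (μ (max N M)) ∈ nhdsWithin (0:ℝ) (Set.Ioi 0) :=
        Ioo_mem_nhdsGT_of_mem ⟨le_refl 0, hμpos _⟩
      filter_upwards [hmem] with h hh
      obtain ⟨n, hnK, hn1, hn2⟩ := find_n μ hμanti hμ0 (max N M) h hh.1 hh.2.le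
      have hnN : N ≤ n := le_trans (le_max_left _ _) hnK
      have hlam := lam_eq μ hμanti hμpos hμ0 N hmono n hnN h hn1 hn2
      rw [hfdef]
      simp only []
      rw [hlam]
      have step1 : (μ (n+1) - μ (n+2)) / (μ (n+1) + (μ (n+1) - μ (n+2))) ≤
          max (h - μ (n+1)) (μ (n+1) - μ (n+2)) / h :=
        profile_ge (μ (n+1)) (μ (n+1) - μ (n+2)) h (hμpos _) (hΔpos _) hn1
      have step2 : p / (1 + p) - ε ≤ (μ (n+1) - μ (n+2)) / (μ (n+1) + (μ (n+1) - μ (n+2))) := by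
        rw [gratio (μ (n+1)) (μ (n+1) - μ (n+2)) (hμpos _) (hΔpos _).le]
        exact gcore p (x (n+1)) ε hp0 (hx0 _) hε (hM (n+1) (by omega) )
      linarith
    by_contra hc
    push_neg at hc
    have h2 : 0 < (p / (1+p) - liminf f (nhdsWithin (0:ℝ) (Set.Ioi 0))) / 2 := by linarith
    have := key _ h2
    linarith
end
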